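/- The John ellipsoid is unique: if (Y, ‖·‖) is an n-dimensional normed space and E₁, E₂ are two ellipsoids (unit balls of inner product norms) contained in the unit ball of Y, both of maximal volume, then E₁ = E₂. -/

import Mathlib

open Matrix MeasureTheory
open scoped MatrixOrder

lemma aux_posDef_of_isUnit {n : ℕ} {Q : Matrix (Fin n) (Fin n) ℝ}
    (hQ : Q.PosSemidef) (hU : IsUnit Q) : Q.PosDef := by
  exact hQ.posDef_iff_isUnit.mpr hU

lemma aux_sqrt_posDef {n : ℕ} {P : Matrix (Fin n) (Fin n) ℝ} (hP : P.PosDef) :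
    (CFC.sqrt P).PosDef := by
  set R := CFC.sqrt P with hRdef
  have hRR : R * R = P := CFC.sqrt_mul_sqrt_self P hP.posSemidef.nonneg
  have hdR2 : R.det * R.det = P.det := by rw [← Matrix.det_mul, hRR]
  have hPdet := hP.det_pos
  have hRdet_ne : R.det ≠ 0 := by
    intro h; rw [h, mul_zero] at hdR2; exact hPdet.ne hdR2
  have hRU : IsUnit R := (Matrix.isUnit_iff_isUnit_det R).mpr hRdet_ne.isUnit
  exact aux_posDef_of_isUnit (CFC.sqrt_nonneg P).posSemidef hRU

lemma aux_ellipsoid_eq_image {n : ℕ} (M : Matrix (Fin n) (Fin n) ℝ)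
    (hMs : M.IsHermitian) (hMi : IsUnit M) :
    {y : Fin n → ℝ | y ⬝ᵥ (M * M) *ᵥ y ≤ 1}
      = (Matrix.toLin' M⁻¹) '' {x : Fin n → ℝ | x ⬝ᵥ x ≤ 1} := by
  have hMd := (Matrix.isUnit_iff_isUnit_det M).mp hMi
  have key : ∀ y, y ⬝ᵥ (M * M) *ᵥ y = (M *ᵥ y) ⬝ᵥ (M *ᵥ y) := by
    intro y
    rw [← mulVec_mulVec, dotProduct_mulVec]
    congr 1
    rw [← Matrix.mulVec_transpose]
    have : Mᵀ = M := by simpa using hMs.eq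
    rw [this]
  ext y
  simp only [Set.mem_setOf_eq, Set.mem_image, Matrix.toLin'_apply, key]
  constructor
  · intro hy
    exact ⟨M *ᵥ y, hy, by rw [mulVec_mulVec, Matrix.nonsing_inv_mul M hMd, one_mulVec]⟩
  · rintro ⟨x, hx, rfl⟩
    rwa [mulVec_mulVec, Matrix.mul_nonsing_inv M hMd, one_mulVec]

lemma aux_vol_image {n : ℕ} (M : Matrix (Fin n) (Fin n) ℝ) (s : Set (Fin n → ℝ)) :
    volume ((Matrix.toLin' M) '' s) = ENNReal.ofReal |M.det| * volume s := by
  rw [Measure.addHaar_image_linearMap, LinearMap.det_toLin']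

lemma aux_eball_pos {n : ℕ} : 0 < volume {x : Fin n → ℝ | x ⬝ᵥ x ≤ 1} := by
  refine lt_of_lt_of_le (Metric.measure_ball_pos volume (0 : Fin n → ℝ)
    (show (0:ℝ) < 1/(n+1) by positivity)) (measure_mono ?_)
  intro x hx
  simp only [Metric.mem_ball, dist_zero_right] at hx
  simp only [Set.mem_setOf_eq, dotProduct]
  calc ∑ i, x i * x i ≤ ∑ _i : Fin n, (1/(n+1) : ℝ)^2 := by
        refine Finset.sum_le_sum fun i _ => ?_
        have hxi : |x i| ≤ 1/(n+1) := by
          refine le_trans ?_ hx.le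
          exact norm_le_pi_norm x i
        calc x i * x i = |x i|^2 := by rw [sq_abs]; ring
          _ ≤ (1/(n+1):ℝ)^2 := by
              apply pow_le_pow_left₀ (abs_nonneg _) hxi
    _ ≤ 1 := by
        rw [Finset.sum_const, Finset.card_univ, Fintype.card_fin, nsmul_eq_mul]
        have hn : (0:ℝ) ≤ (n:ℝ) := Nat.cast_nonneg n
        rw [div_pow, one_pow, mul_div, mul_one, div_le_one (by positivity)]
        nlinarith

lemma aux_eball_lt_top {n : ℕ} : volume {x : Fin n → ℝ | x ⬝ᵥ x ≤ 1} < ⊤ := by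
  refine lt_of_le_of_lt (measure_mono ?_)
    (measure_closedBall_lt_top (x := (0 : Fin n → ℝ)) (r := 1))
  intro x hx
  simp only [Set.mem_setOf_eq, dotProduct] at hx
  simp only [Metric.mem_closedBall, dist_zero_right]
  rw [pi_norm_le_iff_of_nonneg zero_le_one]
  intro i
  have h1 : x i * x i ≤ 1 := by
    refine le_trans ?_ hx
    refine Finset.single_le_sum (f := fun j => x j * x j)
      (fun j _ => mul_self_nonneg _) (Finset.mem_univ i)
  rw [Real.norm_eq_abs, ← Real.sqrt_one]
  rw [show |x i| = Real.sqrt ((x i)^2) by rw [Real.sqrt_sq_eq_abs]]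
  exact Real.sqrt_le_sqrt (by nlinarith)

lemma aux_det_one_add {n : ℕ} {D : Matrix (Fin n) (Fin n) ℝ} (hD : D.IsHermitian) :
    Matrix.det (1 + D) = ∏ i, (1 + hD.eigenvalues i) := by
  have hU : (hD.eigenvectorUnitary : Matrix (Fin n) (Fin n) ℝ) *
      star (hD.eigenvectorUnitary : Matrix (Fin n) (Fin n) ℝ) = 1 :=
    (Matrix.mem_unitaryGroup_iff).mp hD.eigenvectorUnitary.2
  have key : 1 + D = (hD.eigenvectorUnitary : Matrix (Fin n) (Fin n) ℝ) *
      (1 + diagonal (RCLike.ofReal ∘ hD.eigenvalues)) *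
      star (hD.eigenvectorUnitary : Matrix (Fin n) (Fin n) ℝ) := by
    rw [mul_add, mul_one, add_mul, hU]
    congr 1
    simpa using hD.spectral_theorem
  rw [key, det_mul_right_comm, hU, one_mul]
  have : (1 : Matrix (Fin n) (Fin n) ℝ) + diagonal (RCLike.ofReal ∘ hD.eigenvalues)
      = diagonal (fun i => 1 + hD.eigenvalues i) := by
    rw [← diagonal_one, diagonal_add]
    congr 1
  rw [this, det_diagonal]

lemma aux_det_midpoint {n : ℕ} {P Q : Matrix (Fin n) (Fin n) ℝ}
    (hP : P.PosDef) (hQ : Q.PosDef) (hdet : Q.det = P.det)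
    (hle : ((2:ℝ)⁻¹ • (P + Q)).det ≤ P.det) : P = Q := by
  classical
  set R := CFC.sqrt P with hRdef
  have hRR : R * R = P := CFC.sqrt_mul_sqrt_self P hP.posSemidef.nonneg
  have hdR2 : R.det * R.det = P.det := by rw [← Matrix.det_mul, hRR]
  have hPdet := hP.det_pos
  have hRdet_ne : R.det ≠ 0 := by
    intro h; rw [h, mul_zero] at hdR2; exact hPdet.ne hdR2
  have hRU : IsUnit R := (Matrix.isUnit_iff_isUnit_det R).mpr hRdet_ne.isUnit
  have hRpd : R.PosDef := aux_posDef_of_isUnit (CFC.sqrt_nonneg P).posSemidef hRU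
  have hRiR : R⁻¹ * R = 1 := Matrix.nonsing_inv_mul R hRdet_ne.isUnit
  have hRRi : R * R⁻¹ = 1 := Matrix.mul_nonsing_inv R hRdet_ne.isUnit
  have hRih : (R⁻¹)ᴴ = R⁻¹ := hRpd.inv.isHermitian.eq
  set D := R⁻¹ * Q * R⁻¹ with hDdef
  have hDps : D.PosSemidef := by
    have := hQ.posSemidef.mul_mul_conjTranspose_same R⁻¹
    rwa [hRih] at this
  have hDinv_det : R⁻¹.det = (R.det)⁻¹ := by
    rw [Matrix.det_nonsing_inv, Ring.inverse_eq_inv']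
  have hDdet : D.det = 1 := by
    rw [hDdef, Matrix.det_mul, Matrix.det_mul, hDinv_det, hdet]
    field_simp
    nlinarith
  have hDU : IsUnit D := by
    rw [Matrix.isUnit_iff_isUnit_det, hDdet]; exact isUnit_one
  have hDpd : D.PosDef := aux_posDef_of_isUnit hDps hDU
  have hD := hDpd.isHermitian
  have hQrec : R * D * R = Q := by
    rw [hDdef]
    calc R * (R⁻¹ * Q * R⁻¹) * R = (R * R⁻¹) * Q * (R⁻¹ * R) := by
          simp only [Matrix.mul_assoc]
      _ = Q := by rw [hRRi, hRiR, one_mul, mul_one]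
  have hmid : (2:ℝ)⁻¹ • (P + Q) = R * ((2:ℝ)⁻¹ • (1 + D)) * R := by
    rw [Matrix.mul_smul, Matrix.smul_mul]
    congr 1
    rw [mul_add, mul_one, add_mul, hRR, hQrec]
  have hmid_det : ((2:ℝ)⁻¹ • (P + Q)).det = P.det * ((2:ℝ)⁻¹ • (1 + D)).det := by
    rw [hmid, Matrix.det_mul, Matrix.det_mul, mul_comm R.det, mul_assoc, hdR2, mul_comm]
  have hle2 : ((2:ℝ)⁻¹ • (1 + D)).det ≤ 1 := by
    rw [hmid_det] at hle
    nlinarith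
  have hdet2 : ((2:ℝ)⁻¹ • (1 + D)).det = ∏ i, ((2:ℝ)⁻¹ * (1 + hD.eigenvalues i)) := by
    rw [Matrix.det_smul, aux_det_one_add hD, Finset.prod_mul_distrib, Finset.prod_const,
      Finset.card_univ, Fintype.card_fin]
  have hev_pos : ∀ i, 0 < hD.eigenvalues i := fun i => hDpd.eigenvalues_pos i
  have hev_prod : ∏ i, hD.eigenvalues i = 1 := by
    have := hD.det_eq_prod_eigenvalues
    rw [hDdet] at this
    simpa using this.symm
  have hsqrt_prod : ∏ i, Real.sqrt (hD.eigenvalues i) = 1 := by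
    have hsq : (∏ i, Real.sqrt (hD.eigenvalues i)) * (∏ i, Real.sqrt (hD.eigenvalues i)) = 1 := by
      rw [← Finset.prod_mul_distrib]
      rw [← hev_prod]
      exact Finset.prod_congr rfl fun i _ => Real.mul_self_sqrt (hev_pos i).le
    have hpos : 0 < ∏ i, Real.sqrt (hD.eigenvalues i) :=
      Finset.prod_pos fun i _ => Real.sqrt_pos.mpr (hev_pos i)
    nlinarith
  have hev_one : ∀ i, hD.eigenvalues i = 1 := by
    by_contra hne
    push_neg at hne
    obtain ⟨j, hj⟩ := hne
    have hamgm : ∀ i ∈ Finset.univ (α := Fin n),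
        Real.sqrt (hD.eigenvalues i) ≤ (2:ℝ)⁻¹ * (1 + hD.eigenvalues i) := by
      intro i _
      have h := Real.sq_sqrt (hev_pos i).le
      nlinarith [sq_nonneg (Real.sqrt (hD.eigenvalues i) - 1), Real.sqrt_nonneg (hD.eigenvalues i)]
    have hstrict : Real.sqrt (hD.eigenvalues j) < (2:ℝ)⁻¹ * (1 + hD.eigenvalues j) := by
      have h := Real.sq_sqrt (hev_pos j).le
      have hsne : Real.sqrt (hD.eigenvalues j) ≠ 1 := by
        intro h1
        apply hj
        have := Real.sq_sqrt (hev_pos j).le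
        rw [h1] at this
        simpa using this.symm
      have hspos : 0 < (Real.sqrt (hD.eigenvalues j) - 1)^2 :=
        lt_of_le_of_ne (sq_nonneg _) (Ne.symm (pow_ne_zero 2 (sub_ne_zero.mpr hsne)))
      nlinarith [Real.sqrt_nonneg (hD.eigenvalues j)]
    have hlt : ∏ i, Real.sqrt (hD.eigenvalues i) < ∏ i, ((2:ℝ)⁻¹ * (1 + hD.eigenvalues i)) := by
      refine Finset.prod_lt_prod (fun i _ => Real.sqrt_pos.mpr (hev_pos i)) hamgm
        ⟨j, Finset.mem_univ j, hstrict⟩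
    rw [hsqrt_prod, ← hdet2] at hlt
    exact absurd hle2 (not_le.mpr hlt)
  have hDone : D = 1 := by
    have h1 : diagonal (RCLike.ofReal ∘ hD.eigenvalues) = (1 : Matrix (Fin n) (Fin n) ℝ) := by
      have h2 : RCLike.ofReal ∘ hD.eigenvalues = fun _ : Fin n => (1:ℝ) := by
        funext i; simp [hev_one i]
      rw [h2, diagonal_one]
    have := hD.spectral_theorem
    rw [Unitary.conjStarAlgAut_apply, h1, mul_one] at this
    rw [this, (Matrix.mem_unitaryGroup_iff).mp hD.eigenvectorUnitary.2]
  rw [← hQrec, hDone, mul_one, hRR]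

/-- Uniqueness of the John ellipsoid: if two ellipsoids (unit balls of inner
product norms) contained in the unit ball of a norm `N` on `ℝ^n` both have
maximal volume among such ellipsoids, then they coincide. -/
theorem john_ellipsoid_unique {n : ℕ} (N : (Fin n → ℝ) → ℝ)
    (hN0 : ∀ y, N y = 0 ↔ y = 0)
    (hNs : ∀ (c : ℝ) (y), N (c • y) = |c| * N y)
    (hNt : ∀ x y, N (x + y) ≤ N x + N y)
    (A₁ A₂ : Matrix (Fin n) (Fin n) ℝ)
    (hA₁ : A₁.PosDef) (hA₁s : A₁.IsSymm) (hA₂ : A₂.PosDef) (hA₂s : A₂.IsSymm)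
    (hsub₁ : {y : Fin n → ℝ | y ⬝ᵥ A₁ *ᵥ y ≤ 1} ⊆ {y | N y ≤ 1})
    (hsub₂ : {y : Fin n → ℝ | y ⬝ᵥ A₂ *ᵥ y ≤ 1} ⊆ {y | N y ≤ 1})
    (hmax₁ : ∀ B : Matrix (Fin n) (Fin n) ℝ, B.PosDef → B.IsSymm →
      {y : Fin n → ℝ | y ⬝ᵥ B *ᵥ y ≤ 1} ⊆ {y | N y ≤ 1} →
      volume {y : Fin n → ℝ | y ⬝ᵥ B *ᵥ y ≤ 1} ≤
        volume {y : Fin n → ℝ | y ⬝ᵥ A₁ *ᵥ y ≤ 1})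
    (hmax₂ : ∀ B : Matrix (Fin n) (Fin n) ℝ, B.PosDef → B.IsSymm →
      {y : Fin n → ℝ | y ⬝ᵥ B *ᵥ y ≤ 1} ⊆ {y | N y ≤ 1} →
      volume {y : Fin n → ℝ | y ⬝ᵥ B *ᵥ y ≤ 1} ≤
        volume {y : Fin n → ℝ | y ⬝ᵥ A₂ *ᵥ y ≤ 1}) :
    {y : Fin n → ℝ | y ⬝ᵥ A₁ *ᵥ y ≤ 1} = {y : Fin n → ℝ | y ⬝ᵥ A₂ *ᵥ y ≤ 1} := by
  classical
  set B₀ : Set (Fin n → ℝ) := {x | x ⬝ᵥ x ≤ 1} with hB₀def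
  -- square roots and their inverses
  set S₁ := CFC.sqrt A₁ with hS₁def
  set S₂ := CFC.sqrt A₂ with hS₂def
  have hS₁pd : S₁.PosDef := aux_sqrt_posDef hA₁
  have hS₂pd : S₂.PosDef := aux_sqrt_posDef hA₂
  have hS₁mul : S₁ * S₁ = A₁ := CFC.sqrt_mul_sqrt_self A₁ hA₁.posSemidef.nonneg
  have hS₂mul : S₂ * S₂ = A₂ := CFC.sqrt_mul_sqrt_self A₂ hA₂.posSemidef.nonneg
  set T₁ := S₁⁻¹ with hT₁def
  set T₂ := S₂⁻¹ with hT₂def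
  have hT₁pd : T₁.PosDef := hS₁pd.inv
  have hT₂pd : T₂.PosDef := hS₂pd.inv
  have hE₁ : {y : Fin n → ℝ | y ⬝ᵥ A₁ *ᵥ y ≤ 1} = (Matrix.toLin' T₁) '' B₀ := by
    have := aux_ellipsoid_eq_image S₁ hS₁pd.isHermitian hS₁pd.isUnit
    rwa [hS₁mul] at this
  have hE₂ : {y : Fin n → ℝ | y ⬝ᵥ A₂ *ᵥ y ≤ 1} = (Matrix.toLin' T₂) '' B₀ := by
    have := aux_ellipsoid_eq_image S₂ hS₂pd.isHermitian hS₂pd.isUnit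
    rwa [hS₂mul] at this
  have hv0 : volume B₀ ≠ 0 := aux_eball_pos.ne'
  have hvt : volume B₀ ≠ ⊤ := aux_eball_lt_top.ne
  -- equal determinants
  have hVeq : volume {y : Fin n → ℝ | y ⬝ᵥ A₁ *ᵥ y ≤ 1}
      = volume {y : Fin n → ℝ | y ⬝ᵥ A₂ *ᵥ y ≤ 1} :=
    le_antisymm (hmax₂ A₁ hA₁ hA₁s hsub₁) (hmax₁ A₂ hA₂ hA₂s hsub₂)
  have hdets : T₁.det = T₂.det := by
    rw [hE₁, hE₂, aux_vol_image, aux_vol_image] at hVeq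
    have h1 : |T₁.det| ≤ |T₂.det| := by
      have := (ENNReal.mul_le_mul_iff_left hv0 hvt).mp hVeq.le
      exact (ENNReal.ofReal_le_ofReal_iff (abs_nonneg _)).mp this
    have h2 : |T₂.det| ≤ |T₁.det| := by
      have := (ENNReal.mul_le_mul_iff_left hv0 hvt).mp hVeq.ge
      exact (ENNReal.ofReal_le_ofReal_iff (abs_nonneg _)).mp this
    have := le_antisymm h1 h2
    rwa [abs_of_pos hT₁pd.det_pos, abs_of_pos hT₂pd.det_pos] at this
  -- midpoint
  set M := (2:ℝ)⁻¹ • (T₁ + T₂) with hMdef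
  have hMherm : M.IsHermitian := by
    show Mᴴ = M
    rw [hMdef, conjTranspose_smul, conjTranspose_add, hT₁pd.1.eq, hT₂pd.1.eq]
    norm_num
  have hMpd : M.PosDef := by
    refine posDef_iff_dotProduct_mulVec.mpr ⟨hMherm, fun x hx => ?_⟩
    have h1 := hT₁pd.dotProduct_mulVec_pos hx
    have h2 := hT₂pd.dotProduct_mulVec_pos hx
    have key : star x ⬝ᵥ M *ᵥ x
        = (2:ℝ)⁻¹ * (star x ⬝ᵥ T₁ *ᵥ x + star x ⬝ᵥ T₂ *ᵥ x) := by
      rw [hMdef, smul_mulVec, add_mulVec, dotProduct_smul, dotProduct_add]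
      simp [smul_eq_mul]
    rw [key]
    nlinarith
  have hMdet_ne : M.det ≠ 0 := hMpd.det_pos.ne'
  have hMU : IsUnit M := (Matrix.isUnit_iff_isUnit_det M).mpr hMdet_ne.isUnit
  have hMiU : IsUnit M⁻¹ := hMpd.inv.isUnit
  set A₃ := M⁻¹ * M⁻¹ with hA₃def
  have hE₃ : {y : Fin n → ℝ | y ⬝ᵥ A₃ *ᵥ y ≤ 1} = (Matrix.toLin' M) '' B₀ := by
    have := aux_ellipsoid_eq_image M⁻¹ hMpd.inv.isHermitian hMiU
    rwa [Matrix.nonsing_inv_nonsing_inv M hMdet_ne.isUnit] at this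
  have hA₃ps : A₃.PosSemidef := by
    have h1 : (1 : Matrix (Fin n) (Fin n) ℝ).PosSemidef := Matrix.PosSemidef.one
    have := h1.mul_mul_conjTranspose_same M⁻¹
    rwa [mul_one, hMpd.inv.isHermitian.eq] at this
  have hA₃pd : A₃.PosDef := aux_posDef_of_isUnit hA₃ps (hMiU.mul hMiU)
  have hA₃s : A₃.IsSymm := by
    show A₃ᵀ = A₃
    rw [← conjTranspose_eq_transpose_of_trivial, hA₃pd.isHermitian.eq]
  -- feasibility of the midpoint ellipsoid
  have hfeas : {y : Fin n → ℝ | y ⬝ᵥ A₃ *ᵥ y ≤ 1} ⊆ {y | N y ≤ 1} := by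
    rw [hE₃]
    rintro y ⟨x, hx, rfl⟩
    have hu : T₁ *ᵥ x ∈ {y : Fin n → ℝ | y ⬝ᵥ A₁ *ᵥ y ≤ 1} := by
      rw [hE₁]; exact ⟨x, hx, by rw [Matrix.toLin'_apply]⟩
    have hv : T₂ *ᵥ x ∈ {y : Fin n → ℝ | y ⬝ᵥ A₂ *ᵥ y ≤ 1} := by
      rw [hE₂]; exact ⟨x, hx, by rw [Matrix.toLin'_apply]⟩
    have hNu : N (T₁ *ᵥ x) ≤ 1 := hsub₁ hu
    have hNv : N (T₂ *ᵥ x) ≤ 1 := hsub₂ hv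
    have hy : Matrix.toLin' M x = (2:ℝ)⁻¹ • (T₁ *ᵥ x + T₂ *ᵥ x) := by
      rw [Matrix.toLin'_apply, hMdef, smul_mulVec, add_mulVec]
    show N (Matrix.toLin' M x) ≤ 1
    rw [hy, hNs]
    have := hNt (T₁ *ᵥ x) (T₂ *ᵥ x)
    rw [abs_of_pos (by norm_num : (0:ℝ) < 2⁻¹)]
    nlinarith
  -- volume comparison for the midpoint
  have hMle : M.det ≤ T₁.det := by
    have hcmp := hmax₁ A₃ hA₃pd hA₃s hfeas
    rw [hE₃, hE₁, aux_vol_image, aux_vol_image] at hcmp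
    have := (ENNReal.mul_le_mul_iff_left hv0 hvt).mp hcmp
    have h := (ENNReal.ofReal_le_ofReal_iff (abs_nonneg _)).mp this
    rwa [abs_of_pos hMpd.det_pos, abs_of_pos hT₁pd.det_pos] at h
  have hT12 : T₁ = T₂ := aux_det_midpoint hT₁pd hT₂pd hdets.symm hMle
  rw [hE₁, hE₂, hT12]
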